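/- Let m ≥ 2 and K = Q(ζ_{2^m}) with ring of integers O_K = Z[ζ_{2^m}], and let ι denote complex conjugation. Then the Tate cohomology group Ĥ^0(Z/2, O_K) = O_K^ι/(1+ι)O_K is isomorphic to Z/2, generated by the class of 1. -/

import Mathlib

open NumberField

/-- Let `m ≥ 2`, `K = ℚ(ζ_{2^m})` and `σ` the complex conjugation on `𝓞 K = ℤ[ζ_{2^m}]`.
Then the Tate cohomology group `Ĥ⁰(ℤ/2, 𝓞 K) = 𝓞 K^σ/(1+σ)𝓞 K` is isomorphic to `ℤ/2`,
generated by the class of `1`: the class of `1` is nonzero, and every `σ`-fixed element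
is congruent to `0` or to `1` modulo `(1+σ)𝓞 K`. -/
theorem stmt5 (m : ℕ) (hm : 2 ≤ m)
    (K : Type*) [Field K] [NumberField K]
    [IsCyclotomicExtension {2 ^ m} ℚ K]
    (ζ : 𝓞 K) (hζ : IsPrimitiveRoot ζ (2 ^ m))
    (σ : 𝓞 K ≃+* 𝓞 K) (hσ : σ ζ * ζ = 1) :
    (¬ ∃ y : 𝓞 K, (1 : 𝓞 K) = y + σ y) ∧
    (∀ x : 𝓞 K, σ x = x → (∃ y : 𝓞 K, x = y + σ y) ∨ (∃ y : 𝓞 K, x = 1 + (y + σ y))) := by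
  classical
  have hpn : ((⟨2 ^ m, pow_pos (by norm_num) m⟩ : ℕ+)) = (2 : ℕ+) ^ m := by
    ext; push_cast; rfl
  haveI hcyc : IsCyclotomicExtension {(((2 : ℕ+) ^ m : ℕ+) : ℕ)} ℚ K := by
    simp only [PNat.pow_coe, PNat.val_ofNat]; infer_instance
  have hζK : IsPrimitiveRoot (algebraMap (𝓞 K) K ζ) (((2 : ℕ+) ^ m : ℕ+) : ℕ) := by
    have := hζ.map_of_injective (f := algebraMap (𝓞 K) K) RingOfIntegers.coe_injective
    simpa using this
  set B : PowerBasis ℤ (𝓞 K) := hζK.integralPowerBasis with hB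
  have hgen : B.gen = ζ := by
    rw [hB, IsPrimitiveRoot.integralPowerBasis_gen]; rfl
  set n : ℕ := B.dim with hndef
  have hn : n = 2 ^ (m - 1) := by
    rw [hndef, hB, hζK.integralPowerBasis_dim]
    simp only [PNat.pow_coe, PNat.val_ofNat]
    rw [Nat.totient_prime_pow Nat.prime_two (by omega)]
    omega
  set h : ℕ := 2 ^ (m - 2) with hhdef
  have hn2h : n = 2 * h := by
    rw [hn, hhdef, ← pow_succ']
    congr 1
    omega
  have hhpos : 1 ≤ h := Nat.one_le_two_pow
  have hnpos : 0 < n := by omega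
  have hhn : h < n := by omega
  -- ζ^(2^m) = 1 and ζ^n = -1
  have hζ2m : ζ ^ (2 ^ m) = 1 := hζ.pow_eq_one
  have hnn : n + n = 2 ^ m := by
    rw [hn, ← two_mul, ← pow_succ']
    congr 1
    omega
  have hζn : ζ ^ n = -1 := by
    have hsq : ζ ^ n * ζ ^ n = 1 := by
      rw [← pow_add, hnn]
      exact hζ2m
    rcases mul_self_eq_one_iff.1 hsq with h1 | h1
    · exact absurd h1 (hζ.pow_ne_one_of_pos_of_lt (by positivity) (by rw [hn]; exact Nat.pow_lt_pow_right one_lt_two (by omega)))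
    · exact h1
  have hζne : ζ ≠ 0 := by
    intro h0
    rw [h0] at hζ2m
    simp [pow_eq_zero_iff (by positivity : 2 ^ m ≠ 0)] at hζ2m
  -- σ ζ = ζ ^ (2^m - 1)
  have hσζ : σ ζ = ζ ^ (2 ^ m - 1) := by
    have h2 : ζ ^ (2 ^ m - 1) * ζ = 1 := by
      rw [← pow_succ, Nat.sub_add_cancel (Nat.one_le_two_pow)]
      exact hζ2m
    exact mul_right_cancel₀ hζne (hσ.trans h2.symm)
  -- σ (ζ^i) = -ζ^(n-i) for 1 ≤ i < n
  have hσpow : ∀ i : ℕ, 1 ≤ i → i < n → σ (ζ ^ i) = -(ζ ^ (n - i)) := by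
    intro i h1 h2
    have hi2m : i < 2 ^ m := by
      have : n ≤ 2 ^ m := by rw [hn]; exact Nat.pow_le_pow_right (by norm_num) (by omega)
      omega
    rw [map_pow, hσζ, ← pow_mul]
    have he : (2 ^ m - 1) * i = 2 ^ m * (i - 1) + (2 ^ m - i) := by
      have h2m1 : 1 ≤ 2 ^ m := Nat.one_le_two_pow
      zify [h1, hi2m.le, h2m1]
      ring
    rw [he, pow_add, pow_mul, hζ2m, one_pow, one_mul]
    have he2 : 2 ^ m - i = n + (n - i) := by omega
    rw [he2, pow_add, hζn, neg_one_mul]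
  -- basis facts
  have hbasis : ∀ i : Fin n, B.basis i = ζ ^ (i : ℕ) := by
    intro i
    rw [B.coe_basis, hgen]
  have hfin : ∀ e : ℕ → ℤ, (∑ i ∈ Finset.range n, e i • ζ ^ i) = ∑ i : Fin n, e (i : ℕ) • B.basis i := by
    intro e
    rw [Finset.sum_range fun i => e i • ζ ^ i]
    exact Finset.sum_congr rfl fun i _ => by rw [hbasis]
  have huniq : ∀ e f : ℕ → ℤ,
      (∑ i ∈ Finset.range n, e i • ζ ^ i) = (∑ i ∈ Finset.range n, f i • ζ ^ i) →
      ∀ i, i < n → e i = f i := by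
    intro e f hef i hi
    rw [hfin e, hfin f] at hef
    have := congrArg (fun z => (B.basis.repr z : Fin n → ℤ)) hef
    exact congrFun ((B.basis.repr_sum_self (fun j : Fin n => e j)).symm.trans (this.trans (B.basis.repr_sum_self (fun j : Fin n => f j)))) ⟨i, hi⟩
  -- every element is a sum of its coordinates
  have hrepr : ∀ x : 𝓞 K, ∃ c : ℕ → ℤ, x = ∑ i ∈ Finset.range n, c i • ζ ^ i := by
    intro x
    refine ⟨fun i => if hi : i < n then B.basis.repr x ⟨i, hi⟩ else 0, ?_⟩
    conv_lhs => rw [← B.basis.sum_repr x]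
    rw [Finset.sum_range]
    refine Finset.sum_congr rfl fun i _ => ?_
    rw [hbasis]
    congr 1
    simp [i.isLt]
  -- the action of σ on a sum of coordinates
  have hσsum : ∀ d : ℕ → ℤ, σ (∑ i ∈ Finset.range n, d i • ζ ^ i) =
      ∑ i ∈ Finset.range n, (if i = 0 then d 0 else -(d (n - i))) • ζ ^ i := by
    intro d
    rw [map_sum]
    have hterm : ∀ i ∈ Finset.range n, σ (d i • ζ ^ i) = d i • σ (ζ ^ i) :=
      fun i _ => map_zsmul σ (d i) (ζ ^ i)
    rw [Finset.sum_congr rfl hterm]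
    rw [Finset.range_eq_Ico, Finset.sum_eq_sum_Ico_succ_bot hnpos,
      Finset.sum_eq_sum_Ico_succ_bot hnpos]
    congr 1
    · simp
    · have hre : ∑ i ∈ Finset.Ico 1 n, d i • σ (ζ ^ i)
          = ∑ i ∈ Finset.Ico 1 n, (-(d (n - i))) • ζ ^ i := by
        refine Finset.sum_nbij' (fun i => n - i) (fun i => n - i) ?_ ?_ ?_ ?_ ?_
        · intro a ha
          simp only [Finset.mem_Ico] at ha
          show n - a ∈ Finset.Ico 1 n
          rw [Finset.mem_Ico]
          omega
        · intro a ha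
          simp only [Finset.mem_Ico] at ha
          show n - a ∈ Finset.Ico 1 n
          rw [Finset.mem_Ico]
          omega
        · intro a ha
          simp only [Finset.mem_Ico] at ha
          show n - (n - a) = a
          omega
        · intro a ha
          simp only [Finset.mem_Ico] at ha
          show n - (n - a) = a
          omega
        · intro a ha
          simp only [Finset.mem_Ico] at ha
          show d a • σ (ζ ^ a) = (-(d (n - (n - a)))) • ζ ^ (n - a)
          rw [hσpow a ha.1 ha.2, show n - (n - a) = a by omega, smul_neg, neg_smul]
      rw [hre]
      refine Finset.sum_congr rfl fun i hi => ?_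
      simp only [Finset.mem_Ico] at hi
      rw [if_neg (by omega)]
  constructor
  · -- the class of 1 is nonzero
    rintro ⟨y, hy⟩
    obtain ⟨c, hc⟩ := hrepr y
    rw [hc, hσsum, ← Finset.sum_add_distrib] at hy
    have h1 : (1 : 𝓞 K) = ∑ i ∈ Finset.range n, (fun i => if i = 0 then (1:ℤ) else 0) i • ζ ^ i := by
      rw [Finset.sum_eq_single_of_mem 0 (Finset.mem_range.2 hnpos)]
      · simp
      · intro b _ hb; simp [hb]
    rw [h1] at hy
    have := huniq _ (fun i => c i + (if i = 0 then c 0 else -(c (n - i)))) (by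
      rw [hy]
      exact Finset.sum_congr rfl fun i _ => by rw [add_smul]) 0 hnpos
    simp only [show (0:ℕ) = 0 from rfl, if_true] at this
    omega
  · -- every fixed element is ≡ 0 or 1
    intro x hx
    obtain ⟨c, hc⟩ := hrepr x
    -- antisymmetry of coefficients
    have hanti : ∀ i, 1 ≤ i → i < n → c i = -(c (n - i)) := by
      intro i h1 h2
      have hx' : (∑ i ∈ Finset.range n, (if i = 0 then c 0 else -(c (n - i))) • ζ ^ i)
          = ∑ i ∈ Finset.range n, c i • ζ ^ i := by
        rw [← hσsum, ← hc, hx, hc]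
      have := huniq _ _ hx' i h2
      rw [if_neg (by omega)] at this
      omega
    have hnhh : n - h = h := by rw [hn2h]; omega
    have hch : c h = 0 := by
      have := hanti h hhpos hhn
      rw [hnhh] at this
      omega
    set g : ℕ → ℤ := fun i => if i = 0 then c 0 / 2 else if i < h then c i else 0 with hg
    set y : 𝓞 K := ∑ i ∈ Finset.range n, g i • ζ ^ i with hy
    set r : ℤ := c 0 % 2 with hr
    have key : x = (y + σ y) + r • (1 : 𝓞 K) := by
      rw [hy, hσsum, ← Finset.sum_add_distrib]
      have hone : r • (1 : 𝓞 K) = ∑ i ∈ Finset.range n, (if i = 0 then r else 0) • ζ ^ i := by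
        rw [Finset.sum_eq_single_of_mem 0 (Finset.mem_range.2 hnpos)]
        · simp
        · intro b _ hb; simp [hb]
      rw [hone, ← Finset.sum_add_distrib, hc]
      refine Finset.sum_congr rfl fun i hi => ?_
      rw [Finset.mem_range] at hi
      rw [← add_smul, ← add_smul]
      congr 1
      by_cases hi0 : i = 0
      · subst hi0
        simp only [hg, if_pos rfl, hr]
        simp
        omega
      rw [if_neg hi0, if_neg hi0]
      have hni0 : ¬ (n - i = 0) := by omega
      by_cases hih : i < h
      · simp only [hg, if_neg hi0, if_pos hih, if_neg hni0,
          if_neg (show ¬ (n - i < h) by omega)]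
        ring
      by_cases hieq : i = h
      · subst hieq
        simp only [hg, if_neg hi0, if_neg (lt_irrefl h),
          if_neg (show ¬ (n - h = 0) by omega), show n - h = h by omega, hch]
        ring
      · -- h < i < n
        have hih' : h < i := by omega
        simp only [hg, if_neg hi0, if_neg (show ¬ i < h by omega), if_neg hni0,
          if_pos (show n - i < h by omega)]
        rw [hanti i (by omega) (by omega)]
        ring
    have hr01 : r = 0 ∨ r = 1 := Int.emod_two_eq_zero_or_one (c 0)
    rcases hr01 with hr0 | hr1
    · left
      exact ⟨y, by rw [key, hr0, zero_smul, add_zero]⟩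
    · right
      exact ⟨y, by rw [key, hr1, one_smul, add_comm]⟩
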